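/- With uncertain endowment and log-concave g, the Dye-weighted truncated expectation M(v̄) = ((1-p)μ + p∫_{v_min}^{v̄} t g(t)dt)/((1-p)+pG(v̄)) is differentiable with derivative M'(v̄) = pg(v̄)(v̄ - M(v̄))/((1-p)+pG(v̄)), and M'(v̄) < 1 for all v̄ ∈ (v_min, v_max) and all p ∈ (0,1). -/

import Mathlib

open intervalIntegral

section DyeAux

open Set MeasureTheory

lemma dye_aux_pointwise (vmin vmax : ℝ) (g : ℝ → ℝ)
    (hg_pos : ∀ x ∈ Set.Icc vmin vmax, 0 < g x)
    (hg_logconcave : ∀ x ∈ Set.Icc vmin vmax, ∀ y ∈ Set.Icc vmin vmax,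
      ∀ a b : ℝ, 0 ≤ a → 0 ≤ b → a + b = 1 →
        g x ^ a * g y ^ b ≤ g (a * x + b * y))
    (s t v : ℝ) (hs : vmin ≤ s) (hst : s ≤ t) (htv : t ≤ v) (hv : v ≤ vmax) :
    g v * g s ≤ g t * g (s + v - t) := by
  have hsI : s ∈ Icc vmin vmax := ⟨hs, hst.trans (htv.trans hv)⟩
  have hvI : v ∈ Icc vmin vmax := ⟨hs.trans (hst.trans htv), hv⟩
  rcases eq_or_lt_of_le (hst.trans htv) with heq | hlt
  · have h1 : t = v := le_antisymm htv (heq ▸ hst)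
    have h2 : s = v := heq
    rw [h1, h2]; ring_nf; exact le_refl _
  · set a : ℝ := (v - t) / (v - s) with ha
    set b : ℝ := (t - s) / (v - s) with hb
    have hvs : 0 < v - s := by linarith
    have ha0 : 0 ≤ a := div_nonneg (by linarith) hvs.le
    have hb0 : 0 ≤ b := div_nonneg (by linarith) hvs.le
    have hne : v - s ≠ 0 := hvs.ne'
    have hab : a + b = 1 := by rw [ha, hb]; field_simp; ring
    have hcomb1 : a * s + b * v = t := by rw [ha, hb]; field_simp; ring
    have hcomb2 : b * s + a * v = s + v - t := by rw [ha, hb]; field_simp; ring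
    have h1 := hg_logconcave s hsI v hvI a b ha0 hb0 hab
    have h2 := hg_logconcave s hsI v hvI b a hb0 ha0 (by linarith)
    rw [hcomb1] at h1
    rw [hcomb2] at h2
    have hgs := hg_pos s hsI
    have hgv := hg_pos v hvI
    have key : (g s ^ a * g v ^ b) * (g s ^ b * g v ^ a) = g v * g s := by
      rw [show (g s ^ a * g v ^ b) * (g s ^ b * g v ^ a)
            = (g s ^ a * g s ^ b) * (g v ^ b * g v ^ a) by ring,
        ← Real.rpow_add hgs, ← Real.rpow_add hgv, hab, add_comm b a, hab,
        Real.rpow_one, Real.rpow_one]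
      ring
    calc g v * g s = (g s ^ a * g v ^ b) * (g s ^ b * g v ^ a) := key.symm
      _ ≤ g t * g (s + v - t) := by
          apply mul_le_mul h1 h2
            (mul_nonneg (Real.rpow_nonneg hgs.le _) (Real.rpow_nonneg hgv.le _))
          exact (hg_pos t ⟨hs.trans hst, htv.trans hv⟩).le

lemma dye_aux_key (vmin vmax : ℝ) (g : ℝ → ℝ)
    (hg_cont : ContinuousOn g (Set.Icc vmin vmax))
    (hg_pos : ∀ x ∈ Set.Icc vmin vmax, 0 < g x)
    (hpt : ∀ s t v : ℝ, vmin ≤ s → s ≤ t → t ≤ v → v ≤ vmax →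
        g v * g s ≤ g t * g (s + v - t))
    (t v : ℝ) (ht : vmin ≤ t) (htv : t ≤ v) (hvx : v ≤ vmax) :
    g v * (∫ s in vmin..t, g s) ≤ g t * (∫ s in vmin..v, g s) := by
  have hsub : ∀ a b : ℝ, a ∈ Icc vmin vmax → b ∈ Icc vmin vmax →
      IntervalIntegrable g volume a b := fun a b ha hb =>
    (hg_cont.mono (uIcc_subset_Icc ha hb)).intervalIntegrable
  have htI : t ∈ Icc vmin vmax := ⟨ht, htv.trans hvx⟩
  have hvI : v ∈ Icc vmin vmax := ⟨ht.trans htv, hvx⟩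
  have hminI : vmin ∈ Icc vmin vmax := ⟨le_refl _, ht.trans (htv.trans hvx)⟩
  have hmaps : MapsTo (fun s => s + (v - t)) (Icc vmin t) (Icc vmin vmax) := by
    intro s hs
    exact ⟨by simp at hs ⊢; linarith [hs.1], by simp at hs ⊢; linarith [hs.2]⟩
  have hshift_cont : ContinuousOn (fun s => g (s + (v - t))) (Icc vmin t) :=
    hg_cont.comp (continuous_id.add continuous_const).continuousOn hmaps
  have hint2 : IntervalIntegrable (fun s => g t * g (s + (v - t))) volume vmin t := by
    apply IntervalIntegrable.const_mul
    exact (hshift_cont.mono (by rw [uIcc_of_le ht])).intervalIntegrable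
  have hint1 : IntervalIntegrable (fun s => g v * g s) volume vmin t :=
    (hsub vmin t hminI htI).const_mul _
  have step1 : (∫ s in vmin..t, g v * g s) ≤ ∫ s in vmin..t, g t * g (s + (v - t)) := by
    apply integral_mono_on ht hint1 hint2
    intro s hs
    have := hpt s t v hs.1 hs.2 htv hvx
    rwa [add_sub_assoc] at this
  have step2 : (∫ s in vmin..t, g (s + (v - t))) = ∫ s in vmin + (v - t)..v, g s := by
    rw [integral_comp_add_right g (v - t)]
    congr 1; ring
  have step3 : (∫ s in vmin + (v - t)..v, g s) ≤ ∫ s in vmin..v, g s := by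
    have hadj : (∫ s in vmin..vmin + (v - t), g s) + (∫ s in vmin + (v - t)..v, g s)
        = ∫ s in vmin..v, g s := by
      apply integral_add_adjacent_intervals
      · exact hsub _ _ hminI ⟨by linarith, by linarith⟩
      · exact hsub _ _ ⟨by linarith, by linarith⟩ hvI
    have hnn : 0 ≤ ∫ s in vmin..vmin + (v - t), g s := by
      apply integral_nonneg (by linarith)
      intro u hu
      exact (hg_pos u ⟨hu.1, by simp at hu; linarith [hu.2]⟩).le
    linarith
  calc g v * (∫ s in vmin..t, g s) = ∫ s in vmin..t, g v * g s :=
        (intervalIntegral.integral_const_mul _ _).symm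
    _ ≤ ∫ s in vmin..t, g t * g (s + (v - t)) := step1
    _ = g t * ∫ s in vmin..t, g (s + (v - t)) := intervalIntegral.integral_const_mul _ _
    _ ≤ g t * ∫ s in vmin..v, g s := by
        rw [step2]
        exact mul_le_mul_of_nonneg_left step3 (hg_pos t htI).le

lemma dye_aux_gH (vmin vmax : ℝ) (g : ℝ → ℝ)
    (hg_cont : ContinuousOn g (Set.Icc vmin vmax))
    (hkey : ∀ t v : ℝ, vmin ≤ t → t ≤ v → v ≤ vmax →
        g v * (∫ s in vmin..t, g s) ≤ g t * (∫ s in vmin..v, g s))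
    (v : ℝ) (hv1 : vmin ≤ v) (hv2 : v ≤ vmax) :
    g v * (∫ t in vmin..v, ∫ s in vmin..t, g s) ≤ (∫ s in vmin..v, g s) ^ 2 := by
  have hIcc : Icc vmin v ⊆ Icc vmin vmax := Icc_subset_Icc le_rfl hv2
  have hgc : ContinuousOn g (Icc vmin v) := hg_cont.mono hIcc
  have hP : ContinuousOn (fun x => ∫ s in vmin..x, g s) (Icc vmin v) := by
    have := continuousOn_primitive_interval (a := vmin) (b := v) (f := g) (μ := volume)
      (by rw [uIcc_of_le hv1]; exact hgc.integrableOn_Icc)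
    rwa [uIcc_of_le hv1] at this
  have hint1 : IntervalIntegrable (fun t => g v * ∫ s in vmin..t, g s) volume vmin v :=
    ((hP.const_smul (g v)).mono (by rw [uIcc_of_le hv1])).intervalIntegrable
  have hint2 : IntervalIntegrable (fun t => g t * ∫ s in vmin..v, g s) volume vmin v :=
    (hgc.mono (by rw [uIcc_of_le hv1])).intervalIntegrable.mul_const _
  have step : (∫ t in vmin..v, g v * ∫ s in vmin..t, g s)
      ≤ ∫ t in vmin..v, g t * ∫ s in vmin..v, g s := by
    apply integral_mono_on hv1 hint1 hint2
    intro t ht; exact hkey t v ht.1 ht.2 hv2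
  rw [intervalIntegral.integral_const_mul] at step
  rw [intervalIntegral.integral_mul_const] at step
  calc g v * (∫ t in vmin..v, ∫ s in vmin..t, g s)
      ≤ (∫ t in vmin..v, g t) * ∫ s in vmin..v, g s := step
    _ = (∫ s in vmin..v, g s) ^ 2 := by ring

end DyeAux

set_option maxHeartbeats 1000000 in
/-- the Dye-weighted truncated expectation
M(v̄) = ((1-p)μ + p∫_{v_min}^{v̄} t g)/((1-p)+pG(v̄)) is differentiable with
derivative pg(v̄)(v̄ − M(v̄))/((1-p)+pG(v̄)), which is less than 1. -/
theorem dye_weighted_truncated_mean_slope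
    (vmin vmax : ℝ) (hv : vmin < vmax)
    (g : ℝ → ℝ)
    (hg_cont : ContinuousOn g (Set.Icc vmin vmax))
    (hg_pos : ∀ x ∈ Set.Icc vmin vmax, 0 < g x)
    (hg_density : ∫ t in vmin..vmax, g t = 1)
    (hg_logconcave : ∀ x ∈ Set.Icc vmin vmax, ∀ y ∈ Set.Icc vmin vmax,
      ∀ a b : ℝ, 0 ≤ a → 0 ≤ b → a + b = 1 →
        g x ^ a * g y ^ b ≤ g (a * x + b * y))
    (G : ℝ → ℝ) (hG : ∀ v, G v = ∫ t in vmin..v, g t)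
    (μ : ℝ) (hμ : μ = ∫ t in vmin..vmax, t * g t) :
    ∀ p ∈ Set.Ioo (0:ℝ) 1,
      ∀ M : ℝ → ℝ,
        (∀ v, M v = ((1 - p) * μ + p * ∫ t in vmin..v, t * g t) / ((1 - p) + p * G v)) →
        ∀ v ∈ Set.Ioo vmin vmax,
          HasDerivAt M (p * g v * (v - M v) / ((1 - p) + p * G v)) v ∧
          p * g v * (v - M v) / ((1 - p) + p * G v) < 1 := by
  intro p hp M hM v hvmem
  obtain ⟨hp0, hp1⟩ := hp
  obtain ⟨hv1, hv2⟩ := hvmem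
  have hvI : v ∈ Set.Icc vmin vmax := ⟨hv1.le, hv2.le⟩
  have hminI : vmin ∈ Set.Icc vmin vmax := ⟨le_rfl, hv.le⟩
  have hmaxI : vmax ∈ Set.Icc vmin vmax := ⟨hv.le, le_rfl⟩
  -- integrability helpers
  have hsub : ∀ a b : ℝ, a ∈ Set.Icc vmin vmax → b ∈ Set.Icc vmin vmax →
      IntervalIntegrable g MeasureTheory.volume a b := fun a b ha hb =>
    (hg_cont.mono (Set.uIcc_subset_Icc ha hb)).intervalIntegrable
  have htg_cont : ContinuousOn (fun t => t * g t) (Set.Icc vmin vmax) :=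
    continuousOn_id.mul hg_cont
  have hsub' : ∀ a b : ℝ, a ∈ Set.Icc vmin vmax → b ∈ Set.Icc vmin vmax →
      IntervalIntegrable (fun t => t * g t) MeasureTheory.volume a b := fun a b ha hb =>
    (htg_cont.mono (Set.uIcc_subset_Icc ha hb)).intervalIntegrable
  -- G value facts
  set Gv := G v with hGvdef
  have hGv_int : Gv = ∫ t in vmin..v, g t := hG v
  have hGv_pos : 0 < Gv := by
    rw [hGv_int]
    exact intervalIntegral_pos_of_pos_on (hsub vmin v hminI hvI)
      (fun x hx => hg_pos x ⟨hx.1.le, hx.2.le.trans hv2.le⟩) hv1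
  have hGv_le1 : Gv ≤ 1 := by
    have hadj : (∫ t in vmin..v, g t) + (∫ t in v..vmax, g t) = ∫ t in vmin..vmax, g t :=
      integral_add_adjacent_intervals (hsub vmin v hminI hvI) (hsub v vmax hvI hmaxI)
    have hnn : 0 ≤ ∫ t in v..vmax, g t :=
      integral_nonneg hv2.le (fun u hu => (hg_pos u ⟨hv1.le.trans hu.1, hu.2⟩).le)
    rw [hGv_int]
    linarith [hg_density ▸ hadj]
  set D := (1 - p) + p * Gv with hD
  have hD_pos : 0 < D := by
    have : 0 ≤ p * Gv := mul_nonneg hp0.le hGv_pos.le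
    rw [hD]; linarith
  -- derivatives via FTC
  have hmeas : StronglyMeasurableAtFilter g (nhds v) MeasureTheory.volume := by
    refine ContinuousOn.stronglyMeasurableAtFilter isOpen_Ioo
      (hg_cont.mono Set.Ioo_subset_Icc_self) v ⟨hv1, hv2⟩
  have hmeas' : StronglyMeasurableAtFilter (fun t => t * g t) (nhds v)
      MeasureTheory.volume := by
    refine ContinuousOn.stronglyMeasurableAtFilter isOpen_Ioo
      (htg_cont.mono Set.Ioo_subset_Icc_self) v ⟨hv1, hv2⟩
  have hg_at : ContinuousAt g v := hg_cont.continuousAt (Icc_mem_nhds hv1 hv2)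
  have htg_at : ContinuousAt (fun t => t * g t) v :=
    htg_cont.continuousAt (Icc_mem_nhds hv1 hv2)
  have hGfun : G = fun u => ∫ t in vmin..u, g t := funext hG
  have hG' : HasDerivAt G (g v) v := by
    rw [hGfun]
    exact integral_hasDerivAt_right (hsub vmin v hminI hvI) hmeas hg_at
  have hI' : HasDerivAt (fun u => ∫ t in vmin..u, t * g t) (v * g v) v :=
    integral_hasDerivAt_right (hsub' vmin v hminI hvI) hmeas' htg_at
  -- numerator and denominator
  set N : ℝ → ℝ := fun u => (1 - p) * μ + p * ∫ t in vmin..u, t * g t with hN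
  have hN' : HasDerivAt N (p * (v * g v)) v := (hI'.const_mul p).const_add _
  have hDfun' : HasDerivAt (fun u => (1 - p) + p * G u) (p * g v) v :=
    (hG'.const_mul p).const_add _
  have hDv : (1 - p) + p * G v = D := rfl
  have hDne : (1 - p) + p * G v ≠ 0 := hD_pos.ne'
  have hMfun : M = fun u => N u / ((1 - p) + p * G u) := funext hM
  have hdiv : HasDerivAt M
      ((p * (v * g v) * ((1 - p) + p * G v) - N v * (p * g v)) / ((1 - p) + p * G v) ^ 2)
      v := by
    rw [hMfun]
    exact hN'.div hDfun' hDne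
  have hMv : M v = N v / D := hM v
  -- the derivative equals the target expression
  have hderiv_eq : (p * (v * g v) * ((1 - p) + p * G v) - N v * (p * g v))
      / ((1 - p) + p * G v) ^ 2 = p * g v * (v - M v) / ((1 - p) + p * G v) := by
    rw [hMv, hDv]
    field_simp
  have hDeriv : HasDerivAt M (p * g v * (v - M v) / ((1 - p) + p * G v)) v := by
    rw [← hderiv_eq]; exact hdiv
  refine ⟨hDeriv, ?_⟩
  -- Now the slope bound.
  set I := ∫ t in vmin..v, t * g t with hI
  set H := ∫ t in vmin..v, (∫ s in vmin..t, g s) with hHdef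
  -- continuity of the primitive on [vmin, v]
  have hP : ContinuousOn (fun x => ∫ s in vmin..x, g s) (Set.Icc vmin v) := by
    have := intervalIntegral.continuousOn_primitive_interval (a := vmin) (b := v) (f := g)
      (μ := MeasureTheory.volume)
      (by rw [Set.uIcc_of_le hv1.le]
          exact (hg_cont.mono (Set.Icc_subset_Icc le_rfl hv2.le)).integrableOn_Icc)
    rwa [Set.uIcc_of_le hv1.le] at this
  -- integration by parts: H = v * Gv - I
  have hparts : H = v * Gv - I := by
    have hcont : ContinuousOn (fun u => u * ∫ s in vmin..u, g s) (Set.Icc vmin v) :=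
      continuousOn_id.mul hP
    have hderiv : ∀ x ∈ Set.Ioo vmin v,
        HasDerivWithinAt (fun u => u * ∫ s in vmin..u, g s)
          ((∫ s in vmin..x, g s) + x * g x) (Set.Ioi x) x := by
      intro x hx
      have hxI : x ∈ Set.Icc vmin vmax := ⟨hx.1.le, hx.2.le.trans hv2.le⟩
      have hgx : ContinuousAt g x :=
        hg_cont.continuousAt (Icc_mem_nhds hx.1 (hx.2.trans hv2))
      have hmx : StronglyMeasurableAtFilter g (nhds x) MeasureTheory.volume :=
        ContinuousOn.stronglyMeasurableAtFilter isOpen_Ioo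
          (hg_cont.mono Set.Ioo_subset_Icc_self) x ⟨hx.1, hx.2.trans hv2⟩
      have hPx : HasDerivAt (fun u => ∫ s in vmin..u, g s) (g x) x :=
        integral_hasDerivAt_right (hsub vmin x hminI hxI) hmx hgx
      have := (hasDerivAt_id x).mul hPx
      simp only [one_mul] at this
      exact this.hasDerivWithinAt
    have hintsum : IntervalIntegrable
        (fun x => (∫ s in vmin..x, g s) + x * g x) MeasureTheory.volume vmin v := by
      apply IntervalIntegrable.add
      · exact (hP.mono (by rw [Set.uIcc_of_le hv1.le])).intervalIntegrable
      · exact hsub' vmin v hminI hvI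
    have hftc := integral_eq_sub_of_hasDeriv_right_of_le hv1.le hcont hderiv hintsum
    have hsplit : (∫ x in vmin..v, ((∫ s in vmin..x, g s) + x * g x))
        = H + I := by
      rw [integral_add (hP.mono (by rw [Set.uIcc_of_le hv1.le])).intervalIntegrable
        (hsub' vmin v hminI hvI)]
    rw [hsplit] at hftc
    simp only [intervalIntegral.integral_same, mul_zero, sub_zero] at hftc
    rw [← hGv_int] at hftc
    linarith [hftc]
  -- H ≥ 0
  have hH_nonneg : 0 ≤ H := by
    apply integral_nonneg hv1.le
    intro u hu
    apply integral_nonneg hu.1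
    intro s hs
    exact (hg_pos s ⟨hs.1, hs.2.trans (hu.2.trans hv2.le)⟩).le
  -- v - μ ≤ H
  have hvmu : v - μ ≤ H := by
    have e1 : (∫ t in vmin..v, (v - t) * g t) = v * Gv - I := by
      have : (∫ t in vmin..v, (v - t) * g t)
          = (∫ t in vmin..v, v * g t) - ∫ t in vmin..v, t * g t := by
        rw [← integral_sub ((hsub vmin v hminI hvI).const_mul v) (hsub' vmin v hminI hvI)]
        congr 1; funext t; ring
      rw [this, integral_const_mul, ← hGv_int, ← hI]
    have e2 : (∫ t in v..vmax, (v - t) * g t) ≤ 0 := by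
      have : (∫ t in v..vmax, (v - t) * g t) = - ∫ t in v..vmax, (t - v) * g t := by
        rw [← integral_neg]; congr 1; funext t; ring
      rw [this, neg_nonpos]
      apply integral_nonneg hv2.le
      intro u hu
      exact mul_nonneg (by linarith [hu.1]) (hg_pos u ⟨hv1.le.trans hu.1, hu.2⟩).le
    have hsplit2 : (∫ t in vmin..v, (v - t) * g t) + (∫ t in v..vmax, (v - t) * g t)
        = ∫ t in vmin..vmax, (v - t) * g t := by
      apply integral_add_adjacent_intervals
      · apply ContinuousOn.intervalIntegrable
        apply ContinuousOn.mul _ (hg_cont.mono (Set.uIcc_subset_Icc hminI hvI))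
        exact (continuous_const.sub continuous_id).continuousOn
      · apply ContinuousOn.intervalIntegrable
        apply ContinuousOn.mul _ (hg_cont.mono (Set.uIcc_subset_Icc hvI hmaxI))
        exact (continuous_const.sub continuous_id).continuousOn
    have e3 : (∫ t in vmin..vmax, (v - t) * g t) = v - μ := by
      have : (∫ t in vmin..vmax, (v - t) * g t)
          = (∫ t in vmin..vmax, v * g t) - ∫ t in vmin..vmax, t * g t := by
        rw [← integral_sub ((hsub vmin vmax hminI hmaxI).const_mul v)
          (hsub' vmin vmax hminI hmaxI)]
        congr 1; funext t; ring
      rw [this, integral_const_mul, hg_density, ← hμ]; ring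
    have := e1 ▸ e3 ▸ hsplit2
    rw [hparts]
    linarith
  -- key log-concavity bound: g v * H ≤ Gv ^ 2
  have hgH : g v * H ≤ Gv ^ 2 := by
    have := dye_aux_gH vmin vmax g hg_cont
      (fun t w ht htw hwx => dye_aux_key vmin vmax g hg_cont hg_pos
        (fun s t' v' h1 h2 h3 h4 =>
          dye_aux_pointwise vmin vmax g hg_pos hg_logconcave s t' v' h1 h2 h3 h4)
        t w ht htw hwx)
      v hv1.le hv2.le
    rw [← hHdef, ← hGv_int] at this
    exact this
  -- main arithmetic
  have hgv_pos : 0 < g v := hg_pos v hvI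
  have hNv : N v = (1 - p) * μ + p * I := rfl
  rw [hNv] at hMv
  have hGvD : Gv ≤ D := by
    have h0 : 0 ≤ (1 - p) * (1 - Gv) := mul_nonneg (by linarith) (by linarith)
    rw [hD]; nlinarith
  clear_value Gv D I H N
  have hkey2 : p * g v * (v * D - ((1 - p) * μ + p * I)) < D ^ 2 := by
    have hvDN : v * D - ((1 - p) * μ + p * I) = (1 - p) * (v - μ) + p * H := by
      rw [hD, hparts]; ring
    rw [hvDN]
    have c1 : p * g v * ((1 - p) * (v - μ) + p * H) ≤ p * g v * H := by
      have hle : (1 - p) * (v - μ) + p * H ≤ H := by nlinarith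
      exact mul_le_mul_of_nonneg_left hle (mul_nonneg hp0.le hgv_pos.le)
    have c2 : p * (g v * H) ≤ p * Gv ^ 2 :=
      mul_le_mul_of_nonneg_left hgH hp0.le
    have c3 : p * Gv ^ 2 < Gv ^ 2 := by nlinarith [pow_pos hGv_pos 2]
    have c4 : Gv ^ 2 ≤ D ^ 2 := pow_le_pow_left₀ hGv_pos.le hGvD 2
    calc p * g v * ((1 - p) * (v - μ) + p * H) ≤ p * g v * H := c1
      _ = p * (g v * H) := by ring
      _ ≤ p * Gv ^ 2 := c2
      _ < Gv ^ 2 := c3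
      _ ≤ D ^ 2 := c4
  -- conclude
  rw [div_lt_one hD_pos, hMv]
  have hrw : v - ((1 - p) * μ + p * I) / D = (v * D - ((1 - p) * μ + p * I)) / D := by
    field_simp
  rw [hrw]
  have hrw2 : p * g v * ((v * D - ((1 - p) * μ + p * I)) / D)
      = p * g v * (v * D - ((1 - p) * μ + p * I)) / D := by ring
  rw [hrw2, div_lt_iff₀ hD_pos]
  nlinarith [hkey2]
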